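/- Fix an integer K ≥ 1, a real ε ∈ (0,1), and an integer m₀ ≥ 1. Let G be a simple graph on the vertex set {1,…,p} whose maximum degree is at most K. Let b₁,…,b_p be independent Bernoulli(ε) random variables, and let S = {1 ≤ i ≤ p : b_i = 1}. Then the probability that the induced subgraph G[S] contains a connected vertex subset of size m₀ + 1 (equivalently, that G[S] has a connected component with more than m₀ vertices) is at most p·(e·ε·K)^{m₀+1}, where e is Euler's number. -/

import Mathlib

open MeasureTheory Nat

lemma pow_self_le_exp_mul_factorial (n : ℕ) : (n : ℝ) ^ n ≤ Real.exp 1 ^ n * n ! := by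
  induction n with
  | zero => simp
  | succ n ih =>
    have h1 : ((n:ℝ)+1) ^ n ≤ Real.exp 1 ^ (n+1) * n ! := by
      rcases Nat.eq_zero_or_pos n with h | h
      · subst h; simpa using Real.one_le_exp (by norm_num : (0:ℝ) ≤ 1)
      · have hn : (0:ℝ) < n := by exact_mod_cast h
        have key : ((n:ℝ)+1) ^ n ≤ Real.exp 1 * (n:ℝ) ^ n := by
          have h2 : (1 + 1/(n:ℝ)) ≤ Real.exp (1/(n:ℝ)) := by
            have := Real.add_one_le_exp (1/(n:ℝ)); linarith
          have h3 : (1 + 1/(n:ℝ)) ^ n ≤ Real.exp (1/(n:ℝ)) ^ n :=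
            pow_le_pow_left₀ (by positivity) h2 n
          have h4 : Real.exp (1/(n:ℝ)) ^ n = Real.exp 1 := by
            rw [← Real.exp_nat_mul]; congr 1; field_simp
          have h5 : ((n:ℝ)+1) ^ n = (1 + 1/(n:ℝ)) ^ n * (n:ℝ) ^ n := by
            rw [← mul_pow]; congr 1; field_simp
          rw [h5, ← h4]
          exact mul_le_mul_of_nonneg_right h3 (by positivity)
        calc ((n:ℝ)+1) ^ n ≤ Real.exp 1 * (n:ℝ) ^ n := key
          _ ≤ Real.exp 1 * (Real.exp 1 ^ n * n !) :=
              mul_le_mul_of_nonneg_left ih (Real.exp_pos 1).le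
          _ = Real.exp 1 ^ (n+1) * n ! := by ring
    have hfac : ((n:ℝ)+1) * n ! = ((n+1)! : ℝ) := by
      rw [Nat.factorial_succ]; push_cast; ring
    calc ((n+1:ℕ):ℝ) ^ (n+1) = ((n:ℝ)+1) ^ n * ((n:ℝ)+1) := by push_cast; ring
      _ ≤ (Real.exp 1 ^ (n+1) * n !) * ((n:ℝ)+1) :=
          mul_le_mul_of_nonneg_right h1 (by positivity)
      _ = Real.exp 1 ^ (n+1) * (((n:ℝ)+1) * n !) := by ring
      _ = Real.exp 1 ^ (n+1) * (n+1)! := by rw [hfac]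

lemma choose_le_exp_pow (K k : ℕ) : ((k * K).choose k : ℝ) ≤ (Real.exp 1 * K) ^ k := by
  have h1 : ((k * K).choose k : ℝ) ≤ ((k*K : ℕ) : ℝ) ^ k / k ! :=
    Nat.choose_le_pow_div k (k*K)
  have hfac : (0:ℝ) < k ! := by exact_mod_cast k.factorial_pos
  have h2 : (((k*K:ℕ):ℝ)) ^ k / k ! ≤ (Real.exp 1 * K) ^ k := by
    rw [div_le_iff₀ hfac]
    push_cast
    calc ((k:ℝ) * K) ^ k = (k:ℝ)^k * (K:ℝ)^k := by rw [mul_pow]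
      _ ≤ (Real.exp 1 ^ k * k !) * (K:ℝ)^k :=
          mul_le_mul_of_nonneg_right (pow_self_le_exp_mul_factorial k) (by positivity)
      _ = (Real.exp 1 * K) ^ k * k ! := by rw [mul_pow]; ring
  exact h1.trans h2

variable {p : ℕ} (G : SimpleGraph (Fin p)) [DecidableRel G.Adj] (K : ℕ)

/-- the `j`-th neighbor of `u` (default `u`). -/
def nb (u : Fin p) (j : ℕ) : Fin p := ((G.neighborFinset u).sort (· ≤ ·)).getD j u

lemma nb_exists {x y : Fin p} (h : G.Adj x y) : ∃ j, j < G.degree x ∧ nb G x j = y := by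
  have hy : y ∈ (G.neighborFinset x).sort (· ≤ ·) := by
    rw [Finset.mem_sort, SimpleGraph.mem_neighborFinset]; exact h
  obtain ⟨j, hj, hget⟩ := List.mem_iff_getElem.mp hy
  refine ⟨j, ?_, ?_⟩
  · rwa [Finset.length_sort, SimpleGraph.card_neighborFinset_eq_degree] at hj
  · rw [nb, List.getD_eq_getElem _ _ hj, hget]

/-- Build a vertex list from a code list. -/
def build (v : Fin p) (c : List ℕ) : List (Fin p) :=
  c.foldl (fun L n => L ++ [nb G (L.getD (n / K) v) (n % K)]) [v]

lemma build_nil (v : Fin p) : build G K v [] = [v] := rfl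

lemma build_concat (v : Fin p) (c : List ℕ) (n : ℕ) :
    build G K v (c ++ [n]) =
      build G K v c ++ [nb G ((build G K v c).getD (n / K) v) (n % K)] := by
  simp [build, List.foldl_append]

/-- A slot `n` is available. -/
def Avail (S : Finset (Fin p)) (v : Fin p) (L : List (Fin p)) (n : ℕ) : Prop :=
  n / K < L.length ∧ G.Adj (L.getD (n/K) v) (nb G (L.getD (n/K) v) (n % K)) ∧
    nb G (L.getD (n/K) v) (n%K) ∈ S ∧ nb G (L.getD (n/K) v) (n%K) ∉ L

lemma extend (hK : 1 ≤ K) (hdeg : ∀ u, G.degree u ≤ K) (S : Finset (Fin p))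
    (hconn : (G.induce (S : Set (Fin p))).Connected) (v : Fin p) :
    ∀ k (L : List (Fin p)) (c : List ℕ),
    S.card - L.length = k →
    build G K v c = L →
    c.Pairwise (· < ·) →
    L.Nodup →
    (∀ x ∈ L, x ∈ S) →
    c.length + 1 = L.length →
    (∀ n ∈ c, n < (L.length - 1) * K) →
    (∀ n, Avail G K S v L n → ∀ m' ∈ c, m' < n) →
    ∃ c' : List ℕ, c'.Pairwise (· < ·) ∧ c'.length = S.card - 1 ∧
      (∀ n ∈ c', n < (S.card - 1) * K) ∧ (build G K v c').toFinset = S := by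
  intro k
  induction k using Nat.strong_induction_on with
  | _ k ih =>
  intro L c hk hbuild hsort hnodup hsub hlen hbound hinv
  have hLlen : L.toFinset.card = L.length := List.toFinset_card_of_nodup hnodup
  by_cases hLS : L.toFinset = S
  · have hcard : L.length = S.card := by rw [← hLS, hLlen]
    refine ⟨c, hsort, by omega, ?_, by rw [hbuild, hLS]⟩
    intro n hn
    have h := hbound n hn
    rwa [hcard] at h
  · -- L.toFinset ⊂ S
    have hsubF : L.toFinset ⊆ S := by
      intro x hx; exact hsub x (List.mem_toFinset.mp hx)
    have hss : L.toFinset ⊂ S := ssubset_of_ne_of_subset hLS hsubF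
    obtain ⟨w, hwS, hwL⟩ := Finset.exists_of_ssubset hss
    have hLne : L ≠ [] := by
      intro h; rw [h] at hlen; simp at hlen
    have hLpos : 0 < L.length := List.length_pos_iff.mpr hLne
    have hx₀ : L.getD 0 v ∈ L := by
      rw [List.getD_eq_getElem _ _ hLpos]; exact List.getElem_mem _
    -- find a boundary edge via connectivity
    set x₀ : Fin p := L.getD 0 v with hx₀def
    have hx₀S : x₀ ∈ S := hsub _ hx₀
    have hx₀S' : x₀ ∈ (S : Set (Fin p)) := by exact_mod_cast hx₀S
    have hwS' : w ∈ (S : Set (Fin p)) := by exact_mod_cast hwS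
    obtain ⟨W⟩ := hconn.preconnected ⟨x₀, hx₀S'⟩ ⟨w, hwS'⟩
    have hbd := W.exists_boundary_dart {u : (S : Set (Fin p)) | (u : Fin p) ∈ L}
      (by simpa using hx₀) (by simpa using fun h => hwL (List.mem_toFinset.mpr h))
    obtain ⟨d, _, hdfst, hdsnd⟩ := hbd
    have hadj : G.Adj (d.fst : Fin p) (d.snd : Fin p) := d.adj
    set x : Fin p := (d.fst : Fin p)
    set y : Fin p := (d.snd : Fin p)
    have hxL : x ∈ L := hdfst
    have hyS : y ∈ S := (d.snd : (S : Set (Fin p))).2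
    have hyL : y ∉ L := hdsnd
    obtain ⟨j, hjdeg, hjnb⟩ := nb_exists G hadj
    have hjK : j < K := lt_of_lt_of_le hjdeg (hdeg x)
    obtain ⟨i, hi, hgi⟩ := List.mem_iff_getElem.mp hxL
    have hgiD : L.getD i v = x := by rw [List.getD_eq_getElem _ _ hi, hgi]
    have hKpos : 0 < K := hK
    -- slot n₁ is available
    have hdiv : (j + K * i) / K = i := by
      rw [Nat.add_mul_div_left _ _ hKpos, Nat.div_eq_of_lt hjK, Nat.zero_add]
    have hmod : (j + K * i) % K = j := by
      rw [Nat.add_mul_mod_self_left, Nat.mod_eq_of_lt hjK]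
    have hA₁ : Avail G K S v L (j + K * i) := by
      unfold Avail
      rw [hdiv, hmod, hgiD, hjnb]
      exact ⟨hi, hadj, hyS, hyL⟩
    -- minimal available slot
    have : DecidablePred (Avail G K S v L) := Classical.decPred _
    have hex : ∃ n, Avail G K S v L n := ⟨j + K * i, hA₁⟩
    set n₀ := Nat.find hex with hn₀def
    have hA₀ : Avail G K S v L n₀ := Nat.find_spec hex
    have hn₀le : n₀ ≤ j + K * i := Nat.find_min' hex hA₁
    have hn₀lt : n₀ < L.length * K := by
      have : j + K * i < L.length * K := by
        calc j + K * i < K + K * i := by omega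
          _ = K * (i + 1) := by ring
          _ ≤ K * L.length := by exact Nat.mul_le_mul_left K hi
          _ = L.length * K := Nat.mul_comm _ _
      omega
    set w₀ := nb G (L.getD (n₀ / K) v) (n₀ % K) with hw₀def
    have hw₀S : w₀ ∈ S := hA₀.2.2.1
    have hw₀L : w₀ ∉ L := hA₀.2.2.2
    set L' := L ++ [w₀] with hL'def
    set c' := c ++ [n₀] with hc'def
    have hL'len : L'.length = L.length + 1 := by simp [hL'def]
    have hLcard : L.length < S.card := by
      rw [← hLlen]; exact Finset.card_lt_card hss
    have hclt : ∀ m' ∈ c, m' < n₀ := fun m' hm' => hinv n₀ hA₀ m' hm'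
    -- apply IH
    have hbuild' : build G K v c' = L' := by
      rw [hc'def, build_concat, hbuild]
    have hsort' : c'.Pairwise (· < ·) := by
      refine List.pairwise_append.mpr ⟨hsort, List.pairwise_singleton _ _, ?_⟩
      intro a ha b hb
      simp only [List.mem_singleton] at hb
      subst hb; exact hclt a ha
    have hnodup' : L'.Nodup := by
      rw [hL'def, List.nodup_append]
      exact ⟨hnodup, List.nodup_singleton _, by
        intro a ha b hb hab; rw [List.mem_singleton] at hb
        exact hw₀L (by rw [← hb, ← hab]; exact ha)⟩
    have hsub' : ∀ z ∈ L', z ∈ S := by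
      intro z hz
      rcases List.mem_append.mp hz with h | h
      · exact hsub z h
      · simp at h; subst h; exact hw₀S
    have hlen' : c'.length + 1 = L'.length := by
      simp [hc'def, hL'def]; omega
    have hbound' : ∀ n ∈ c', n < (L'.length - 1) * K := by
      intro n hn
      rw [hL'len]
      rcases List.mem_append.mp hn with h | h
      · have := hbound n h
        have : (L.length - 1) * K ≤ L.length * K := Nat.mul_le_mul_right K (by omega)
        simp only [Nat.add_sub_cancel]
        omega
      · simp at h; subst h; simpa using hn₀lt
    have hgetD' : ∀ i', i' < L.length → L'.getD i' v = L.getD i' v := by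
      intro i' hi'
      rw [hL'def]
      exact List.getD_append _ _ _ _ hi'
    have hinv' : ∀ n, Avail G K S v L' n → ∀ m' ∈ c', m' < n := by
      intro n hA m' hm'
      have hmem : m' ∈ c ∨ m' = n₀ := by
        rcases List.mem_append.mp hm' with h | h
        · exact Or.inl h
        · simp at h; exact Or.inr h
      by_cases hcase : n / K < L.length
      · -- Avail L n holds
        have hAL : Avail G K S v L n := by
          obtain ⟨h1, h2, h3, h4⟩ := hA
          rw [hgetD' _ hcase] at h2 h3 h4
          exact ⟨hcase, h2, h3, fun hmem' => h4 (List.mem_append.mpr (Or.inl hmem'))⟩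
        have hn₀n : n₀ ≤ n := Nat.find_min' hex hAL
        have hne : n₀ ≠ n := by
          intro he
          have hc2 : n₀ / K < L.length := by rw [he]; exact hcase
          have h4 := hA.2.2.2
          rw [← he, hgetD' _ hc2] at h4
          refine h4 (List.mem_append.mpr (Or.inr ?_))
          rw [← hw₀def]
          exact List.mem_singleton_self _
        rcases hmem with h | h
        · exact lt_of_lt_of_le (hclt m' h) hn₀n
        · subst h; omega
      · -- new-parent slot: n ≥ L.length * K > n₀
        have h1 : n / K ≥ L.length := Nat.le_of_not_lt hcase
        have h2 : L.length * K ≤ n := by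
          calc L.length * K ≤ n / K * K := Nat.mul_le_mul_right K h1
            _ ≤ n := Nat.div_mul_le_self n K
        have : n₀ < n := lt_of_lt_of_le hn₀lt h2
        rcases hmem with h | h
        · exact lt_trans (hclt m' h) this
        · omega
    have hk' : S.card - L'.length < k := by rw [hL'len]; omega
    exact ih _ hk' L' c' rfl hbuild' hsort' hnodup' hsub' hlen' hbound' hinv' 

lemma code_exists (hK : 1 ≤ K) (hdeg : ∀ u, G.degree u ≤ K) (S : Finset (Fin p))
    (hconn : (G.induce (S : Set (Fin p))).Connected) (v : Fin p) (hv : v ∈ S) :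
    ∃ c : List ℕ, c.Pairwise (· < ·) ∧ c.length = S.card - 1 ∧
      (∀ n ∈ c, n < (S.card - 1) * K) ∧ (build G K v c).toFinset = S := by
  refine extend G K hK hdeg S hconn v (S.card - 1) [v] [] (by simp) rfl
    (List.Pairwise.nil) (List.nodup_singleton v) (by simpa using hv) (by simp)
    (by simp) (by simp)

/-- decoding function -/
def decode (v : Fin p) (F : Finset ℕ) : Finset (Fin p) :=
  (build G K v (F.sort (· ≤ ·))).toFinset

lemma count_fixed (hK : 1 ≤ K) (hdeg : ∀ u, G.degree u ≤ K) (m : ℕ) (v : Fin p) :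
    (Finset.univ.filter fun S : Finset (Fin p) =>
        v ∈ S ∧ S.card = m ∧ (G.induce (S : Set (Fin p))).Connected).card
      ≤ ((m - 1) * K).choose (m - 1) := by
  have hsub : (Finset.univ.filter fun S : Finset (Fin p) =>
      v ∈ S ∧ S.card = m ∧ (G.induce (S : Set (Fin p))).Connected)
      ⊆ ((Finset.range ((m - 1) * K)).powersetCard (m - 1)).image (decode G K v) := by
    intro S hS
    rw [Finset.mem_filter] at hS
    obtain ⟨-, hv, hcard, hconn⟩ := hS
    obtain ⟨c, hcsort, hclen, hcbound, hcbuild⟩ := code_exists G K hK hdeg S hconn v hv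
    have hcnodup : c.Nodup := hcsort.nodup
    refine Finset.mem_image.mpr ⟨c.toFinset, ?_, ?_⟩
    · rw [Finset.mem_powersetCard]
      constructor
      · intro n hn
        rw [Finset.mem_range]
        exact hcard ▸ hcbound n (List.mem_toFinset.mp hn)
      · rw [List.toFinset_card_of_nodup hcnodup, hclen, hcard]
    · have hsorteq : c.toFinset.sort (· ≤ ·) = c :=
        (List.toFinset_sort (r := (· ≤ ·)) hcnodup).mpr (hcsort.imp fun h => le_of_lt h)
      rw [decode, hsorteq, hcbuild]
  calc _ ≤ (((Finset.range ((m - 1) * K)).powersetCard (m - 1)).image (decode G K v)).card :=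
        Finset.card_le_card hsub
    _ ≤ ((Finset.range ((m - 1) * K)).powersetCard (m - 1)).card := Finset.card_image_le
    _ = ((m - 1) * K).choose (m - 1) := by
        rw [Finset.card_powersetCard, Finset.card_range]

lemma count_total (hK : 1 ≤ K) (hdeg : ∀ u, G.degree u ≤ K) (m : ℕ) (hm : 1 ≤ m) :
    (Finset.univ.filter fun S : Finset (Fin p) =>
        S.card = m ∧ (G.induce (S : Set (Fin p))).Connected).card
      ≤ p * ((m - 1) * K).choose (m - 1) := by
  have hsub : (Finset.univ.filter fun S : Finset (Fin p) =>
      S.card = m ∧ (G.induce (S : Set (Fin p))).Connected)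
      ⊆ Finset.univ.biUnion fun v : Fin p =>
          Finset.univ.filter fun S : Finset (Fin p) =>
            v ∈ S ∧ S.card = m ∧ (G.induce (S : Set (Fin p))).Connected := by
    intro S hS
    rw [Finset.mem_filter] at hS
    obtain ⟨-, hcard, hconn⟩ := hS
    have : S.Nonempty := Finset.card_pos.mp (by omega)
    obtain ⟨v, hv⟩ := this
    exact Finset.mem_biUnion.mpr ⟨v, Finset.mem_univ v,
      Finset.mem_filter.mpr ⟨Finset.mem_univ S, hv, hcard, hconn⟩⟩
  calc _ ≤ _ := Finset.card_le_card hsub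
    _ ≤ ∑ v : Fin p, (Finset.univ.filter fun S : Finset (Fin p) =>
          v ∈ S ∧ S.card = m ∧ (G.induce (S : Set (Fin p))).Connected).card :=
        Finset.card_biUnion_le
    _ ≤ ∑ _v : Fin p, ((m - 1) * K).choose (m - 1) :=
        Finset.sum_le_sum fun v _ => count_fixed G K hK hdeg m v
    _ = p * ((m - 1) * K).choose (m - 1) := by simp [Finset.sum_const, mul_comm]

theorem bernoulli_signal_graphlet_size_bound
    (p K m₀ : ℕ) (hK : 1 ≤ K) (hm : 1 ≤ m₀) (ε : ℝ) (hε0 : 0 < ε) (hε1 : ε < 1)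
    (G : SimpleGraph (Fin p)) [DecidableRel G.Adj] (hdeg : ∀ v, G.degree v ≤ K) :
    (Measure.pi fun _ : Fin p =>
        (PMF.bernoulli (Real.toNNReal ε) (Real.toNNReal_le_one.mpr hε1.le)).toMeasure)
      {b : Fin p → Bool | ∃ S : Finset (Fin p), (∀ i ∈ S, b i = true) ∧
        S.card = m₀ + 1 ∧ (G.induce (S : Set (Fin p))).Connected}
      ≤ ENNReal.ofReal (p * (Real.exp 1 * ε * K) ^ (m₀ + 1)) := by
  set ν := (PMF.bernoulli (Real.toNNReal ε) (Real.toNNReal_le_one.mpr hε1.le)).toMeasure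
    with hν
  set μ := Measure.pi fun _ : Fin p => ν with hμ
  set 𝒞 := Finset.univ.filter fun S : Finset (Fin p) =>
    S.card = m₀ + 1 ∧ (G.induce (S : Set (Fin p))).Connected with h𝒞
  have hevent : {b : Fin p → Bool | ∃ S : Finset (Fin p), (∀ i ∈ S, b i = true) ∧
      S.card = m₀ + 1 ∧ (G.induce (S : Set (Fin p))).Connected}
      = ⋃ S ∈ 𝒞, {b : Fin p → Bool | ∀ i ∈ S, b i = true} := by
    ext b
    simp only [Set.mem_setOf_eq, Set.mem_iUnion, h𝒞, Finset.mem_filter, Finset.mem_univ,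
      true_and, exists_prop]
    constructor
    · rintro ⟨S, h1, h2, h3⟩; exact ⟨S, ⟨h2, h3⟩, h1⟩
    · rintro ⟨S, ⟨h2, h3⟩, h1⟩; exact ⟨S, h1, h2, h3⟩
  have hAS : ∀ S : Finset (Fin p),
      μ {b : Fin p → Bool | ∀ i ∈ S, b i = true} = ENNReal.ofReal ε ^ S.card := by
    intro S
    have hset : {b : Fin p → Bool | ∀ i ∈ S, b i = true}
        = Set.pi Set.univ (fun i => if i ∈ S then ({true} : Set Bool) else Set.univ) := by
      ext b
      simp only [Set.mem_setOf_eq, Set.mem_pi, Set.mem_univ, forall_const]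
      refine forall_congr' fun i => ?_
      by_cases h : i ∈ S <;> simp [h]
    rw [hset, hμ, Measure.pi_pi]
    have hone : ∀ i : Fin p,
        ν (if i ∈ S then ({true} : Set Bool) else Set.univ)
          = if i ∈ S then ENNReal.ofReal ε else 1 := by
      intro i
      by_cases h : i ∈ S <;> simp only [h, if_true, if_false]
      · rw [hν, PMF.toMeasure_apply_singleton _ _ (measurableSet_singleton _)]
        rfl
      · exact measure_univ
    calc ∏ i, ν (if i ∈ S then ({true} : Set Bool) else Set.univ)
        = ∏ i, (if i ∈ S then ENNReal.ofReal ε else 1) :=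
          Finset.prod_congr rfl fun i _ => hone i
      _ = ∏ _i ∈ S, ENNReal.ofReal ε := by
          rw [Finset.prod_ite_mem, Finset.univ_inter]
      _ = ENNReal.ofReal ε ^ S.card := Finset.prod_const _
  rw [hevent]
  have hcount : 𝒞.card ≤ p * (m₀ * K).choose m₀ := by
    have := count_total G K hK hdeg (m₀ + 1) (by omega)
    simpa using this
  calc μ (⋃ S ∈ 𝒞, {b : Fin p → Bool | ∀ i ∈ S, b i = true})
      ≤ ∑ S ∈ 𝒞, μ {b : Fin p → Bool | ∀ i ∈ S, b i = true} :=
        measure_biUnion_finset_le _ _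
    _ = ∑ S ∈ 𝒞, ENNReal.ofReal ε ^ (m₀ + 1) := by
        refine Finset.sum_congr rfl fun S hS => ?_
        rw [hAS S]
        rw [h𝒞, Finset.mem_filter] at hS
        rw [hS.2.1]
    _ = 𝒞.card * ENNReal.ofReal ε ^ (m₀ + 1) := by
        rw [Finset.sum_const, nsmul_eq_mul]
    _ ≤ ENNReal.ofReal (p * (Real.exp 1 * ε * K) ^ (m₀ + 1)) := by
        rw [← ENNReal.ofReal_pow hε0.le, ← ENNReal.ofReal_natCast,
          ← ENNReal.ofReal_mul (by positivity)]
        apply ENNReal.ofReal_le_ofReal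
        have heK1 : (1 : ℝ) ≤ Real.exp 1 * K := by
          have h1 : (1:ℝ) ≤ Real.exp 1 := Real.one_le_exp (by norm_num)
          have h2 : (1:ℝ) ≤ K := by exact_mod_cast hK
          nlinarith
        have hchoose : ((m₀ * K).choose m₀ : ℝ) ≤ (Real.exp 1 * K) ^ (m₀ + 1) :=
          (choose_le_exp_pow K m₀).trans (pow_le_pow_right₀ heK1 (Nat.le_succ m₀))
        have h1 : (𝒞.card : ℝ) ≤ (p : ℝ) * (m₀ * K).choose m₀ := by
          exact_mod_cast hcount
        have h2 : (𝒞.card : ℝ) ≤ (p : ℝ) * (Real.exp 1 * K) ^ (m₀ + 1) :=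
          h1.trans (by
            apply mul_le_mul_of_nonneg_left hchoose (by positivity))
        have h3 : (Real.exp 1 * ε * K) ^ (m₀ + 1)
            = (Real.exp 1 * K) ^ (m₀ + 1) * ε ^ (m₀ + 1) := by
          rw [← mul_pow]; ring_nf
        rw [h3, ← mul_assoc]
        exact mul_le_mul_of_nonneg_right h2 (by positivity)
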